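/- For the Sorgenfrey line ℝ_ℓ, the poset Q(ℝ_ℓ) of compact saturated subsets ordered by reverse inclusion has one-step closure but is not a continuous poset. -/

import Mathlib

open Set

section OrderDefs

variable {L : Type*} [Preorder L]

/-- Downward closure `↓A`. -/
def dw (A : Set L) : Set L := {x | ∃ a ∈ A, x ≤ a}

/-- Upward closure `↑A`. -/
def up (A : Set L) : Set L := {x | ∃ a ∈ A, a ≤ x}

/-- Scott closure of a set. -/
def scottCl (A : Set L) : Set L := @closure L (Topology.scott L Set.univ) A

/-- `A' = {x : ∃ directed D ⊆ ↓A with x = sup D}`. -/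
def oneStep (A : Set L) : Set L :=
  {x | ∃ D : Set L, D ⊆ dw A ∧ D.Nonempty ∧ DirectedOn (· ≤ ·) D ∧ IsLUB D x}

/-- `A'' = {x : ∃ directed D ⊆ ↓A with x ≤ sup D}`. -/
def weakOneStep (A : Set L) : Set L :=
  {x | ∃ D : Set L, D ⊆ dw A ∧ D.Nonempty ∧ DirectedOn (· ≤ ·) D ∧ ∃ y, IsLUB D y ∧ x ≤ y}

/-- A poset has one-step closure if `cl(A) = A'` for all `A`. -/
def HasOneStepClosure (L : Type*) [Preorder L] : Prop :=
  ∀ A : Set L, scottCl A = oneStep A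

/-- A poset has weak one-step closure if `cl(A) = A''` for all `A`. -/
def HasWeakOneStepClosure (L : Type*) [Preorder L] : Prop :=
  ∀ A : Set L, scottCl A = weakOneStep A

/-- Meet continuity: `x ≤ sup D` implies `x ∈ cl(↓D ∩ ↓x)`. -/
def MeetContinuous (L : Type*) [Preorder L] : Prop :=
  ∀ x : L, ∀ D : Set L, D.Nonempty → DirectedOn (· ≤ ·) D → ∀ s, IsLUB D s → x ≤ s →
    x ∈ scottCl (dw D ∩ dw ({x} : Set L))

/-- The way-below relation `x ≪ y`. -/
def wayBelow (x y : L) : Prop :=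
  ∀ D : Set L, D.Nonempty → DirectedOn (· ≤ ·) D → ∀ s, IsLUB D s → y ≤ s →
    (D ∩ up ({x} : Set L)).Nonempty

/-- The weakly way-below relation `x ≪_w y`. -/
def weaklyWayBelow (x y : L) : Prop :=
  ∀ D : Set L, D.Nonempty → DirectedOn (· ≤ ·) D → IsLUB D y →
    (D ∩ up ({x} : Set L)).Nonempty

/-- A continuous poset: each `⇓x` is directed with supremum `x`. -/
def ContinuousPoset (L : Type*) [Preorder L] : Prop :=
  ∀ x : L, {y | wayBelow y x}.Nonempty ∧ DirectedOn (· ≤ ·) {y | wayBelow y x} ∧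
    IsLUB {y | wayBelow y x} x

/-- An exact poset: each `⇓_w x` is directed with supremum `x`. -/
def ExactPoset (L : Type*) [Preorder L] : Prop :=
  ∀ x : L, {y | weaklyWayBelow y x}.Nonempty ∧ DirectedOn (· ≤ ·) {y | weaklyWayBelow y x} ∧
    IsLUB {y | weaklyWayBelow y x} x

/-- `F ≪ x` for a set `F`: every directed `D` with `sup D ≥ x` meets `↑F`. -/
def finWayBelow (F : Set L) (x : L) : Prop :=
  ∀ D : Set L, D.Nonempty → DirectedOn (· ≤ ·) D → ∀ s, IsLUB D s → x ≤ s →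
    (D ∩ up F).Nonempty

/-- A quasicontinuous poset: each `fin(x)` is a directed family (Smyth preorder)
with `↑x = ⋂_{F ∈ fin(x)} ↑F`. -/
def QuasicontinuousPoset (L : Type*) [Preorder L] : Prop :=
  ∀ x : L, {F : Set L | F.Finite ∧ finWayBelow F x}.Nonempty ∧
    DirectedOn (fun F G => up G ⊆ up F) {F : Set L | F.Finite ∧ finWayBelow F x} ∧
    up ({x} : Set L) = ⋂ F ∈ {F : Set L | F.Finite ∧ finWayBelow F x}, up F

/-- A dcpo: every (nonempty) directed subset has a least upper bound. -/
def IsDcpo (L : Type*) [Preorder L] : Prop :=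
  ∀ D : Set L, D.Nonempty → DirectedOn (· ≤ ·) D → ∃ x, IsLUB D x

end OrderDefs

section TopoDefs

variable {X : Type*} [TopologicalSpace X]

/-- A set is saturated if it is the intersection of all open sets containing it. -/
def IsSaturatedSet (A : Set X) : Prop := A = ⋂₀ {U : Set X | IsOpen U ∧ A ⊆ U}

/-- A space is well-filtered if for every filtered family `𝒞` of compact saturated sets
and every open `U` with `⋂𝒞 ⊆ U` there is `K ∈ 𝒞` with `K ⊆ U`. -/
def WellFiltered (X : Type*) [TopologicalSpace X] : Prop :=
  ∀ 𝒞 : Set (Set X), 𝒞.Nonempty → (∀ K ∈ 𝒞, IsCompact K ∧ IsSaturatedSet K) →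
    DirectedOn (fun A B => B ⊆ A) 𝒞 →
    ∀ U : Set X, IsOpen U → ⋂₀ 𝒞 ⊆ U → ∃ K ∈ 𝒞, K ⊆ U

end TopoDefs

/-- The Sorgenfrey line: `ℝ` with the topology generated by half-open intervals `[a, b)`. -/
def Rl : Type := ℝ

noncomputable instance : LinearOrder Rl := inferInstanceAs (LinearOrder ℝ)

instance : TopologicalSpace Rl :=
  TopologicalSpace.generateFrom {s : Set Rl | ∃ a b : Rl, a < b ∧ s = Set.Ico a b}

/-- `Q(X)`: the compact saturated subsets of `X`, ordered by reverse inclusion. -/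
def QX (X : Type*) [TopologicalSpace X] : Type _ :=
  {K : Set X // IsCompact K ∧ IsSaturatedSet K}

instance {X : Type*} [TopologicalSpace X] : PartialOrder (QX X) where
  le K K' := K'.1 ⊆ K.1
  le_refl K := subset_rfl
  le_trans _ _ _ h1 h2 := Set.Subset.trans h2 h1
  le_antisymm a b h1 h2 := Subtype.ext (Set.Subset.antisymm h2 h1)

namespace OSC

abbrev toRl (s : Set ℝ) : Set Rl := s

abbrev unRl (s : Set Rl) : Set ℝ := s

def unR : Rl → ℝ := fun x => x

lemma rl_isOpen_Ico {a b : ℝ} (h : a < b) : IsOpen (toRl (Ico a b)) :=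
  TopologicalSpace.GenerateOpen.basic _ ⟨a, b, h, rfl⟩

lemma rl_isOpen_of_basis {V : Set ℝ} (h : ∀ x ∈ V, ∃ ε > 0, Ico x (x + ε) ⊆ V) :
    IsOpen (toRl V) := by
  rw [isOpen_iff_forall_mem_open]
  intro x hx
  obtain ⟨ε, hε, hsub⟩ := h (unR x) hx
  refine ⟨toRl (Ico (unR x) (unR x + ε)), hsub, rl_isOpen_Ico (by linarith), ?_⟩
  exact (⟨le_refl _, by linarith⟩ : unR x ∈ Ico (unR x) (unR x + ε))

lemma rl_mem_basis {U : Set Rl} (hU : IsOpen U) :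
    ∀ x : ℝ, x ∈ unRl U → ∃ ε > 0, Ico x (x + ε) ⊆ unRl U := by
  change TopologicalSpace.GenerateOpen _ U at hU
  induction hU with
  | basic s hs =>
      obtain ⟨a, b, hab, rfl⟩ := hs
      intro x hx
      have hax : unR a ≤ x := hx.1
      have hxb : x < unR b := hx.2
      refine ⟨unR b - x, by linarith, fun y hy => ?_⟩
      have h1 : x ≤ y := hy.1
      have h2 : y < x + (unR b - x) := hy.2
      exact (⟨le_trans hax h1, by linarith⟩ : y ∈ Ico (unR a) (unR b))
  | univ => exact fun x _ => ⟨1, one_pos, fun y _ => trivial⟩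
  | inter s t _ _ ihs iht =>
      intro x hx
      obtain ⟨ε1, hε1, h1⟩ := ihs x hx.1
      obtain ⟨ε2, hε2, h2⟩ := iht x hx.2
      refine ⟨min ε1 ε2, lt_min hε1 hε2, fun y hy => ?_⟩
      exact ⟨h1 ⟨hy.1, lt_of_lt_of_le hy.2 (add_le_add_right (min_le_left _ _) x)⟩,
             h2 ⟨hy.1, lt_of_lt_of_le hy.2 (add_le_add_right (min_le_right _ _) x)⟩⟩
  | sUnion S _ ih =>
      intro x hx
      obtain ⟨s, hsS, hxs⟩ := hx
      obtain ⟨ε, hε, h⟩ := ih s hsS x hxs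
      exact ⟨ε, hε, fun y hy => ⟨s, hsS, h hy⟩⟩

lemma rl_isOpen_of_real {V : Set ℝ} (h : IsOpen V) : IsOpen (toRl V) := by
  apply rl_isOpen_of_basis
  intro x hx
  obtain ⟨ε, hε, hb⟩ := Metric.isOpen_iff.mp h x hx
  refine ⟨ε, hε, fun y hy => hb ?_⟩
  obtain ⟨h1, h2⟩ := hy
  simp only [Metric.mem_ball, Real.dist_eq, abs_lt]
  constructor <;> linarith

lemma ico_disj {a b c d : ℝ} (h : b ≤ c) : Disjoint (toRl (Ico a b)) (toRl (Ico c d)) := by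
  rw [Set.disjoint_left]
  rintro z ⟨h1, h2⟩ ⟨h3, h4⟩
  have h2' : unR z < b := h2
  have h3' : c ≤ unR z := h3
  exact absurd (lt_of_lt_of_le h2' h) (not_lt.mpr h3')

instance : T2Space Rl := by
  constructor
  intro x y hxy
  rcases lt_or_gt_of_ne hxy with h | h
  · refine ⟨toRl (Ico (unR x) (unR y)), toRl (Ico (unR y) (unR y + 1)),
      rl_isOpen_Ico h, rl_isOpen_Ico (by linarith), ?_, ?_, ico_disj le_rfl⟩
    · exact (⟨le_refl _, h⟩ : unR x ∈ Ico (unR x) (unR y))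
    · exact (⟨le_refl _, by linarith⟩ : unR y ∈ Ico (unR y) (unR y + 1))
  · refine ⟨toRl (Ico (unR x) (unR x + 1)), toRl (Ico (unR y) (unR x)),
      rl_isOpen_Ico (by linarith), rl_isOpen_Ico h, ?_, ?_, (ico_disj le_rfl).symm⟩
    · exact (⟨le_refl _, by linarith⟩ : unR x ∈ Ico (unR x) (unR x + 1))
    · exact (⟨le_refl _, h⟩ : unR y ∈ Ico (unR y) (unR x))

lemma rl_continuous_unR : Continuous unR := by
  rw [continuous_def]
  intro V hV
  exact rl_isOpen_of_real hV

lemma rl_compact_real {K : Set ℝ} (h : IsCompact (toRl K)) : IsCompact K := by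
  have h2 := h.image rl_continuous_unR
  have he : unR '' (toRl K) = K := by
    apply Subset.antisymm
    · rintro z ⟨w, hw, rfl⟩; exact hw
    · intro z hz; exact ⟨z, hz, rfl⟩
  rwa [he] at h2

end OSC

namespace OSC

lemma rl_nll {K : Set ℝ} (h : IsCompact (toRl K)) (p : ℝ) :
    ∃ δ > 0, ∀ q ∈ K, ¬(p - δ < q ∧ q < p) := by
  by_contra hc
  push_neg at hc
  -- hc : ∀ δ > 0, ∃ q ∈ K, p - δ < q ∧ q < p
  classical
  have hcov : toRl K ⊆ ⋃ t : ℝ, (if t < p then toRl (Iio t) else toRl (Ici p)) := by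
    intro q hq
    have hq' : unR q ∈ K := hq
    rcases lt_or_ge (unR q) p with h1 | h1
    · refine mem_iUnion.mpr ⟨(unR q + p) / 2, ?_⟩
      rw [if_pos (by linarith)]
      exact ((by linarith : unR q < (unR q + p) / 2) : unR q ∈ Iio ((unR q + p) / 2))
    · exact mem_iUnion.mpr ⟨p, by rw [if_neg (lt_irrefl p)]; exact (h1 : unR q ∈ Ici p)⟩
  have hopen : ∀ t : ℝ, IsOpen (if t < p then toRl (Iio t) else toRl (Ici p)) := by
    intro t
    split_ifs
    · exact rl_isOpen_of_real isOpen_Iio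
    · apply rl_isOpen_of_basis
      intro x hx
      exact ⟨1, one_pos, fun y hy => le_trans hx hy.1⟩
  obtain ⟨t, ht⟩ := h.elim_finite_subcover _ hopen hcov
  set T : Finset ℝ := t.filter (· < p) with hT
  by_cases hTne : T.Nonempty
  · set m := T.max' hTne with hm
    have hmp : m < p := (Finset.mem_filter.mp (T.max'_mem hTne)).2
    obtain ⟨q, hqK, hq1, hq2⟩ := hc (p - m) (by linarith)
    have hqU := ht hqK
    obtain ⟨i, hi⟩ := mem_iUnion.mp hqU
    have hi := mem_iUnion.mp hi
    obtain ⟨hit, hqi⟩ := hi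
    by_cases hip : i < p
    · rw [if_pos hip] at hqi
      have hqlt : q < i := hqi
      have him : i ≤ m := T.le_max' i (Finset.mem_filter.mpr ⟨hit, hip⟩)
      have hq1' : p - (p - m) < q := hq1
      linarith
    · rw [if_neg hip] at hqi
      have : p ≤ q := hqi
      linarith
  · obtain ⟨q, hqK, hq1, hq2⟩ := hc 1 one_pos
    obtain ⟨i, hi⟩ := mem_iUnion.mp (ht hqK)
    have hi := mem_iUnion.mp hi
    obtain ⟨hit, hqi⟩ := hi
    by_cases hip : i < p
    · exact hTne ⟨i, Finset.mem_filter.mpr ⟨hit, hip⟩⟩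
    · rw [if_neg hip] at hqi
      have : p ≤ q := hqi
      linarith

lemma rl_compact_of_nll {K : Set ℝ} (hcl : IsClosed K) (hbb : BddBelow K) (hba : BddAbove K)
    (hnll : ∀ p : ℝ, ∃ δ > 0, ∀ q ∈ K, ¬(p - δ < q ∧ q < p)) :
    IsCompact (toRl K) := by
  classical
  apply isCompact_of_finite_subcover
  intro ι U hUo hcov
  rcases K.eq_empty_or_nonempty with hKe | hne
  · exact ⟨∅, by rw [show toRl K = ∅ from hKe]; exact empty_subset _⟩
  -- selection of cover elements
  have hsel : ∀ y ∈ K, ∃ i : ι, ∃ ε > 0, Ico y (y + ε) ⊆ unRl (U i) := by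
    intro y hy
    have : (y : Rl) ∈ ⋃ i, U i := hcov hy
    obtain ⟨i, hi⟩ := mem_iUnion.mp this
    obtain ⟨ε, hε, hsub⟩ := rl_mem_basis (hUo i) y hi
    exact ⟨i, ε, hε, hsub⟩
  set P : ℝ → Prop := fun y => ∃ t : Finset ι, ∀ z ∈ K, y ≤ z → z ∈ ⋃ i ∈ t, unRl (U i)
    with hPdef
  set G : Set ℝ := {y | y ∈ K ∧ P y} with hG
  -- top element
  have hsupK : sSup K ∈ K := hcl.csSup_mem hne hba
  have hGne : G.Nonempty := by
    obtain ⟨i, ε, hε, hsub⟩ := hsel _ hsupK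
    refine ⟨sSup K, hsupK, ⟨{i}, fun z hz hle => ?_⟩⟩
    have hzle : z ≤ sSup K := le_csSup hba hz
    have hzeq : z = sSup K := le_antisymm hzle hle
    simp only [Finset.mem_singleton, mem_iUnion]
    exact ⟨i, rfl, hsub ⟨le_of_eq hzeq.symm, by rw [hzeq]; linarith⟩⟩
  have hGbb : BddBelow G := hbb.mono (fun y hy => hy.1)
  set m := sInf G with hmdef
  -- m ∈ K
  have hmK : m ∈ K := by
    by_contra hm
    obtain ⟨η, hη, hball⟩ := Metric.isOpen_iff.mp hcl.isOpen_compl m hm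
    obtain ⟨g, hgG, hglt⟩ := (csInf_lt_iff hGbb hGne).mp (by linarith : sInf G < m + η)
    have hmg : m ≤ g := csInf_le hGbb hgG
    exact hball (by rw [Metric.mem_ball, Real.dist_eq, abs_lt]; constructor <;> linarith) hgG.1
  -- P m
  have hPm : P m := by
    obtain ⟨i0, ε0, hε0, hsub0⟩ := hsel m hmK
    obtain ⟨g, hgG, hglt⟩ := (csInf_lt_iff hGbb hGne).mp (by linarith : sInf G < m + ε0)
    have hmg : m ≤ g := csInf_le hGbb hgG
    obtain ⟨tg, htg⟩ := hgG.2
    refine ⟨insert i0 tg, fun z hz hmz => ?_⟩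
    rcases le_or_gt g z with hgz | hzg
    · have := htg z hz hgz
      simp only [mem_iUnion] at this ⊢
      obtain ⟨i, hit, hzi⟩ := this
      exact ⟨i, Finset.mem_insert_of_mem hit, hzi⟩
    · simp only [mem_iUnion]
      exact ⟨i0, Finset.mem_insert_self _ _, hsub0 ⟨hmz, by linarith⟩⟩
  -- no elements below m
  have hlow : ∀ q ∈ K, ¬(q < m) := by
    intro q hqK hqm
    set T : Set ℝ := {q ∈ K | q < m} with hTdef
    have hTne : T.Nonempty := ⟨q, hqK, hqm⟩
    have hTba : BddAbove T := ⟨m, fun z hz => le_of_lt hz.2⟩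
    obtain ⟨δm, hδm, hδmP⟩ := hnll m
    have hTbound : ∀ z ∈ T, z ≤ m - δm := by
      intro z hz
      by_contra hzb
      push_neg at hzb
      exact hδmP z hz.1 ⟨by linarith, hz.2⟩
    set zs := sSup T with hzs
    have hzsm : zs ≤ m - δm := csSup_le hTne hTbound
    -- zs ∈ K
    have hzsK : zs ∈ K := by
      by_contra hzk
      obtain ⟨η, hη, hball⟩ := Metric.isOpen_iff.mp hcl.isOpen_compl zs hzk
      obtain ⟨w, hwT, hwlt⟩ := exists_lt_of_lt_csSup hTne (by linarith : zs - η < zs)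
      have hwle : w ≤ zs := le_csSup hTba hwT
      exact hball (by rw [Metric.mem_ball, Real.dist_eq, abs_lt]; constructor <;> linarith) hwT.1
    have hzsT : zs ∈ T := ⟨hzsK, by linarith⟩
    -- gap: no K-elements in (zs, m)
    have hgap : ∀ z ∈ K, zs < z → m ≤ z := by
      intro z hzK hzz
      by_contra hzm
      push_neg at hzm
      exact absurd (le_csSup hTba ⟨hzK, hzm⟩) (not_le.mpr hzz)
    -- P zs
    obtain ⟨izs, εzs, hεzs, hsubzs⟩ := hsel zs hzsK
    obtain ⟨tm, htm⟩ := hPm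
    have hPzs : P zs := by
      refine ⟨insert izs tm, fun z hz hzsz => ?_⟩
      rcases eq_or_lt_of_le hzsz with rfl | hlt
      · simp only [mem_iUnion]
        exact ⟨izs, Finset.mem_insert_self _ _, hsubzs ⟨le_rfl, by linarith⟩⟩
      · have hmz : m ≤ z := hgap z hz hlt
        have := htm z hz hmz
        simp only [mem_iUnion] at this ⊢
        obtain ⟨i, hit, hzi⟩ := this
        exact ⟨i, Finset.mem_insert_of_mem hit, hzi⟩
    have : m ≤ zs := csInf_le hGbb ⟨hzsK, hPzs⟩
    linarith
  obtain ⟨tm, htm⟩ := hPm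
  refine ⟨tm, fun z hz => ?_⟩
  have hz' : unR z ∈ K := hz
  have hmz : m ≤ unR z := not_lt.mp (fun hc => hlow (unR z) hz' hc)
  have := htm (unR z) hz' hmz
  simp only [mem_iUnion] at this ⊢
  exact this

end OSC

namespace OSC

def djS (Kr : Set ℝ) (an : ℕ → Set ℝ) (j : ℕ) : Set ℝ :=
  Kr ∪ ⋃ (n : ℕ) (_ : j ≤ n), an n

section DJ

variable {Kr : Set ℝ} {an : ℕ → Set ℝ}

lemma djS_supK (j : ℕ) : Kr ⊆ djS Kr an j := subset_union_left

lemma djS_mem (j : ℕ) : an j ⊆ djS Kr an j := by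
  intro z hz
  exact Or.inr (mem_iUnion.mpr ⟨j, mem_iUnion.mpr ⟨le_rfl, hz⟩⟩)

lemma djS_anti {j k : ℕ} (h : j ≤ k) : djS Kr an k ⊆ djS Kr an j := by
  rintro z (hz | hz)
  · exact Or.inl hz
  · obtain ⟨n, hn⟩ := mem_iUnion.mp hz
    obtain ⟨hkn, hzn⟩ := mem_iUnion.mp hn
    exact Or.inr (mem_iUnion.mpr ⟨n, mem_iUnion.mpr ⟨le_trans h hkn, hzn⟩⟩)

variable (haU : ∀ n : ℕ, ∀ z ∈ an n, ∃ x ∈ Kr, x ≤ z ∧ z < x + 1/((n:ℝ)+1))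

lemma inv_succ_le {η : ℝ} (hη : 0 < η) : ∃ N : ℕ, ∀ n : ℕ, N ≤ n → 1/((n:ℝ)+1) ≤ η := by
  obtain ⟨N, hN⟩ := exists_nat_one_div_lt hη
  refine ⟨N, fun n hn => ?_⟩
  have hcast : ((N:ℝ)+1) ≤ ((n:ℝ)+1) := add_le_add_left (Nat.cast_le.mpr hn) 1
  have h2 : 1/((n:ℝ)+1) ≤ 1/((N:ℝ)+1) := one_div_le_one_div_of_le (by positivity) hcast
  linarith

include haU in
lemma far_of_not_mem (hKcl : IsClosed Kr) {p : ℝ} (hp : p ∉ Kr) :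
    ∃ η > 0, (∀ x ∈ Kr, ¬ |x - p| < 2*η) ∧
      ∀ n : ℕ, 1/((n:ℝ)+1) ≤ η → ∀ z ∈ an n, ¬ |z - p| < η := by
  obtain ⟨η₁, hη₁, hball⟩ := Metric.isOpen_iff.mp hKcl.isOpen_compl p hp
  refine ⟨η₁/2, by linarith, ?_, ?_⟩
  · intro x hx hlt
    exact hball (by rw [Metric.mem_ball, Real.dist_eq]; linarith) hx
  · intro n hn z hz hlt
    obtain ⟨x, hxK, hxz, hzx⟩ := haU n z hz
    refine hball (a := x) ?_ hxK
    rw [Metric.mem_ball, Real.dist_eq, abs_lt]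
    rw [abs_lt] at hlt
    constructor <;> linarith

include haU in
lemma far_left (hnK : ∀ p : ℝ, ∃ δ > 0, ∀ q ∈ Kr, ¬(p - δ < q ∧ q < p)) (p : ℝ) :
    ∃ δ > 0, (∀ q ∈ Kr, ¬(p - 2*δ < q ∧ q < p)) ∧
      ∀ n : ℕ, 1/((n:ℝ)+1) ≤ δ → ∀ z ∈ an n, ¬(p - δ < z ∧ z < p) := by
  obtain ⟨δ₀, hδ₀, h0⟩ := hnK p
  refine ⟨δ₀/2, by linarith, ?_, ?_⟩
  · intro q hq ⟨h1, h2⟩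
    exact h0 q hq ⟨by linarith, h2⟩
  · rintro n hn z hz ⟨h1, h2⟩
    obtain ⟨x, hxK, hxz, hzx⟩ := haU n z hz
    exact h0 x hxK ⟨by linarith, lt_of_le_of_lt hxz h2⟩

include haU in
lemma djS_bddBelow (hbb : BddBelow Kr) (j : ℕ) : BddBelow (djS Kr an j) := by
  obtain ⟨l, hl⟩ := hbb
  refine ⟨l, ?_⟩
  rintro z (hz | hz)
  · exact hl hz
  · obtain ⟨n, hn⟩ := mem_iUnion.mp hz
    obtain ⟨hjn, hzn⟩ := mem_iUnion.mp hn
    obtain ⟨x, hxK, hxz, _⟩ := haU n z hzn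
    exact le_trans (hl hxK) hxz

include haU in
lemma djS_bddAbove (hba : BddAbove Kr) (j : ℕ) : BddAbove (djS Kr an j) := by
  obtain ⟨u, hu⟩ := hba
  refine ⟨u + 1, ?_⟩
  rintro z (hz | hz)
  · exact le_trans (hu hz) (by linarith)
  · obtain ⟨n, hn⟩ := mem_iUnion.mp hz
    obtain ⟨hjn, hzn⟩ := mem_iUnion.mp hn
    obtain ⟨x, hxK, hxz, hzx⟩ := haU n z hzn
    have h1 : 1/((n:ℝ)+1) ≤ 1 := by
      rw [div_le_one (by positivity)]
      have : (0:ℝ) ≤ (n:ℝ) := Nat.cast_nonneg n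
      linarith
    have := hu hxK
    linarith

include haU in
lemma djS_closed (hKcl : IsClosed Kr) (haCl : ∀ n, IsClosed (an n)) (j : ℕ) :
    IsClosed (djS Kr an j) := by
  classical
  rw [← isOpen_compl_iff]
  rw [Metric.isOpen_iff]
  intro p hp
  have hpK : p ∉ Kr := fun h => hp (djS_supK j h)
  obtain ⟨η, hη, hKfar, hafar⟩ := far_of_not_mem haU hKcl hpK
  obtain ⟨N, hN⟩ := inv_succ_le hη
  have hsmall : ∀ n : ℕ, ∃ ρ > 0, (j ≤ n ∧ n ≤ N) → ∀ z ∈ an n, ¬ |z - p| < ρ := by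
    intro n
    by_cases hcase : j ≤ n ∧ n ≤ N
    · have hpan : p ∉ an n := fun h =>
        hp (Or.inr (mem_iUnion.mpr ⟨n, mem_iUnion.mpr ⟨hcase.1, h⟩⟩))
      obtain ⟨ρ, hρ, hball⟩ := Metric.isOpen_iff.mp (haCl n).isOpen_compl p hpan
      refine ⟨ρ, hρ, fun _ z hz hlt => ?_⟩
      exact hball (by rw [Metric.mem_ball, Real.dist_eq]; exact hlt) hz
    · exact ⟨1, one_pos, fun h => absurd h hcase⟩
  choose e he1 he2 using hsmall
  set ρ0 := (Finset.range (N+1)).inf' Finset.nonempty_range_add_one e with hρ0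
  have hρ0pos : 0 < ρ0 := by
    rw [hρ0, Finset.lt_inf'_iff]
    exact fun n _ => he1 n
  refine ⟨min η ρ0, lt_min hη hρ0pos, ?_⟩
  intro z hzball
  rw [Metric.mem_ball, Real.dist_eq] at hzball
  rintro (hz | hz)
  · refine hKfar z hz ?_
    have h1 : |z - p| < η := lt_of_lt_of_le hzball (min_le_left _ _)
    linarith [abs_nonneg (z - p)]
  · obtain ⟨n, hn⟩ := mem_iUnion.mp hz
    obtain ⟨hjn, hzn⟩ := mem_iUnion.mp hn
    rcases le_or_gt n N with hnN | hnN
    · exact he2 n ⟨hjn, hnN⟩ z hzn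
        (lt_of_lt_of_le hzball (le_trans (min_le_right _ _)
          (Finset.inf'_le e (Finset.mem_range.mpr (by omega)))))
    · exact hafar n (hN n (by omega)) z hzn (lt_of_lt_of_le hzball (min_le_left _ _))

include haU in
lemma djS_nll (hnK : ∀ p : ℝ, ∃ δ > 0, ∀ q ∈ Kr, ¬(p - δ < q ∧ q < p))
    (haC : ∀ n, IsCompact (toRl (an n))) (j : ℕ) (p : ℝ) :
    ∃ δ > 0, ∀ q ∈ djS Kr an j, ¬(p - δ < q ∧ q < p) := by
  classical
  obtain ⟨δ, hδ, hKfar, hafar⟩ := far_left haU hnK p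
  obtain ⟨N, hN⟩ := inv_succ_le hδ
  have hsmall : ∀ n : ℕ, ∃ ρ > 0, ∀ q ∈ an n, ¬(p - ρ < q ∧ q < p) :=
    fun n => rl_nll (haC n) p
  choose e he1 he2 using hsmall
  set ρ0 := (Finset.range (N+1)).inf' Finset.nonempty_range_add_one e with hρ0
  have hρ0pos : 0 < ρ0 := by
    rw [hρ0, Finset.lt_inf'_iff]
    exact fun n _ => he1 n
  refine ⟨min δ ρ0, lt_min hδ hρ0pos, ?_⟩
  rintro q (hq | hq) ⟨h1, h2⟩
  · refine hKfar q hq ⟨?_, h2⟩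
    have : min δ ρ0 ≤ δ := min_le_left _ _
    linarith
  · obtain ⟨n, hn⟩ := mem_iUnion.mp hq
    obtain ⟨hjn, hqn⟩ := mem_iUnion.mp hn
    rcases le_or_gt n N with hnN | hnN
    · refine he2 n q hqn ⟨?_, h2⟩
      have : min δ ρ0 ≤ e n :=
        le_trans (min_le_right _ _) (Finset.inf'_le e (Finset.mem_range.mpr (by omega)))
      linarith
    · refine hafar n (hN n (by omega)) q hqn ⟨?_, h2⟩
      have : min δ ρ0 ≤ δ := min_le_left _ _
      linarith

include haU in
lemma djS_compact (hK : IsCompact (toRl Kr)) (haC : ∀ n, IsCompact (toRl (an n))) (j : ℕ) :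
    IsCompact (toRl (djS Kr an j)) := by
  have hKr := rl_compact_real hK
  refine rl_compact_of_nll
    (djS_closed haU hKr.isClosed (fun n => (rl_compact_real (haC n)).isClosed) j)
    (djS_bddBelow haU hKr.bddBelow j) (djS_bddAbove haU hKr.bddAbove j)
    (djS_nll haU (rl_nll hK) haC j)

include haU in
lemma djS_iInter (hK : IsCompact (toRl Kr)) : ⋂ j, djS Kr an j = Kr := by
  apply Subset.antisymm
  · intro p hp
    by_contra hpK
    obtain ⟨η, hη, hKfar, hafar⟩ := far_of_not_mem haU (rl_compact_real hK).isClosed hpK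
    obtain ⟨N, hN⟩ := inv_succ_le hη
    have hpN := mem_iInter.mp hp N
    rcases hpN with h | h
    · exact hpK h
    · obtain ⟨n, hn⟩ := mem_iUnion.mp h
      obtain ⟨hNn, hpn⟩ := mem_iUnion.mp hn
      exact hafar n (hN n hNn) p hpn (by simp [hη])
  · exact fun p hp => mem_iInter.mpr (fun j => djS_supK j hp)

end DJ

end OSC

namespace OSC

lemma rl_sat (A : Set Rl) : IsSaturatedSet A := by
  apply Subset.antisymm
  · intro x hx U hU
    exact hU.2 hx
  · intro x hx
    by_contra hxA
    exact (hx {x}ᶜ ⟨isOpen_compl_singleton,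
      fun y hy (h : y = x) => hxA (h ▸ hy)⟩) rfl

def mkQ (S : Set ℝ) (h : IsCompact (toRl S)) : QX Rl := ⟨toRl S, h, rl_sat _⟩

lemma qx_isLUB {D : Set (QX Rl)} {K : QX Rl} (h : K.1 = ⋂ d ∈ D, d.1) : IsLUB D K := by
  constructor
  · intro d hd
    show K.1 ⊆ d.1
    rw [h]
    exact biInter_subset_of_mem hd
  · intro x hx
    show x.1 ⊆ K.1
    rw [h]
    exact subset_iInter₂ (fun d hd => hx hd)

lemma qx_lub_inter {D : Set (QX Rl)} (hne : D.Nonempty) {s : QX Rl} (h : IsLUB D s) :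
    s.1 = ⋂ d ∈ D, d.1 := by
  obtain ⟨d₀, hd₀⟩ := hne
  have hcl : IsClosed (⋂ d ∈ D, d.1) := isClosed_biInter (fun d _ => d.2.1.isClosed)
  have hcomp : IsCompact (⋂ d ∈ D, d.1) := by
    have heq : (⋂ d ∈ D, d.1) = d₀.1 ∩ ⋂ d ∈ D, d.1 :=
      (inter_eq_self_of_subset_right (biInter_subset_of_mem hd₀)).symm
    rw [heq]
    exact d₀.2.1.inter_right hcl
  have hub : (⟨⋂ d ∈ D, d.1, hcomp, rl_sat _⟩ : QX Rl) ∈ upperBounds D :=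
    fun d hd => biInter_subset_of_mem hd
  apply Subset.antisymm
  · exact subset_iInter₂ (fun d hd => h.1 hd)
  · exact h.2 hub

lemma qx_wf {D : Set (QX Rl)} (hne : D.Nonempty) (hdir : DirectedOn (· ≤ ·) D)
    {s : QX Rl} (h : IsLUB D s) {U : Set Rl} (hU : IsOpen U) (hsub : s.1 ⊆ U) :
    ∃ d ∈ D, d.1 ⊆ U := by
  by_contra hc
  push_neg at hc
  have hnonel : ∀ d : D, ((d : QX Rl).1 ∩ Uᶜ).Nonempty := by
    intro d
    rcases Set.not_subset.mp (hc d d.2) with ⟨z, hz1, hz2⟩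
    exact ⟨z, hz1, hz2⟩
  haveI : Nonempty D := hne.to_subtype
  have hdi : Directed (· ⊇ ·) (fun d : D => (d : QX Rl).1 ∩ Uᶜ) := by
    intro d e
    obtain ⟨f, hfD, hdf, hef⟩ := hdir d d.2 e e.2
    exact ⟨⟨f, hfD⟩, inter_subset_inter_left _ hdf, inter_subset_inter_left _ hef⟩
  obtain ⟨z, hz⟩ := IsCompact.nonempty_iInter_of_directed_nonempty_isCompact_isClosed
    _ hdi hnonel (fun d => (d : QX Rl).2.1.inter_right hU.isClosed_compl)
    (fun d => ((d : QX Rl).2.1.isClosed).inter hU.isClosed_compl)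
  rw [mem_iInter] at hz
  have hzs : z ∈ s.1 := by
    rw [qx_lub_inter hne h]
    exact mem_iInter₂.mpr (fun d hd => (hz ⟨d, hd⟩).1)
  exact (hz ⟨_, hne.some_mem⟩).2 (hsub hzs)

def Star (A : Set (QX Rl)) : Set (QX Rl) :=
  {K | ∀ U : Set Rl, IsOpen U → K.1 ⊆ U → ∃ a ∈ A, a.1 ⊆ U}

lemma star_sub (A : Set (QX Rl)) : A ⊆ Star A := fun a ha _U _hU hsub => ⟨a, ha, hsub⟩

lemma star_lower (A : Set (QX Rl)) : IsLowerSet (Star A) := by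
  intro a b hba ha U hU hsub
  exact ha U hU (fun z hz => hsub (hba hz))

lemma star_dsc (A : Set (QX Rl)) : DirSupClosed (Star A) := by
  intro D hsub hne hdir s hlub U hU hsU
  obtain ⟨d, hdD, hdU⟩ := qx_wf hne hdir hlub hU hsU
  exact hsub hdD U hU hdU

lemma star_main (A : Set (QX Rl)) : Star A ⊆ oneStep A := by
  intro K hK
  set Kr : Set ℝ := unRl K.1 with hKrdef
  have hUno : ∀ n : ℕ, IsOpen (toRl (⋃ x ∈ Kr, Ico x (x + 1/((n:ℝ)+1)))) := by
    intro n
    apply rl_isOpen_of_basis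
    intro z hz
    simp only [mem_iUnion, mem_Ico] at hz
    obtain ⟨x, hx, hz1, hz2⟩ := hz
    refine ⟨x + 1/((n:ℝ)+1) - z, by linarith, fun y hy => ?_⟩
    simp only [mem_iUnion, mem_Ico]
    exact ⟨x, hx, le_trans hz1 hy.1, by linarith [hy.2]⟩
  have hKUn : ∀ n : ℕ, K.1 ⊆ toRl (⋃ x ∈ Kr, Ico x (x + 1/((n:ℝ)+1))) := by
    intro n z hz
    have hm : unR z ∈ ⋃ x ∈ Kr, Ico x (x + 1/((n:ℝ)+1)) :=
      mem_biUnion hz ⟨le_rfl, lt_add_of_pos_right _ (by positivity)⟩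
    exact hm
  have hsel : ∀ n : ℕ, ∃ a ∈ A, a.1 ⊆ toRl (⋃ x ∈ Kr, Ico x (x + 1/((n:ℝ)+1))) :=
    fun n => hK _ (hUno n) (hKUn n)
  choose a haA haUsub using hsel
  set an : ℕ → Set ℝ := fun n => unRl (a n).1 with handef
  have haU' : ∀ n : ℕ, ∀ z ∈ an n, ∃ x ∈ Kr, x ≤ z ∧ z < x + 1/((n:ℝ)+1) := by
    intro n z hz
    have := haUsub n hz
    change z ∈ (⋃ x ∈ Kr, Ico x (x + 1/((n:ℝ)+1)) : Set ℝ) at this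
    simpa only [mem_iUnion, mem_Ico, exists_prop] using this
  have hKc : IsCompact (toRl Kr) := K.2.1
  have haC : ∀ n, IsCompact (toRl (an n)) := fun n => (a n).2.1
  set d : ℕ → QX Rl := fun j => mkQ (djS Kr an j) (djS_compact haU' hKc haC j) with hddef
  refine ⟨range d, ?_, range_nonempty _, ?_, ?_⟩
  · rintro x ⟨j, rfl⟩
    exact ⟨a j, haA j, fun z hz => djS_mem j hz⟩
  · rintro x ⟨j, rfl⟩ y ⟨k, rfl⟩
    refine ⟨d (max j k), mem_range_self _, ?_, ?_⟩
    · exact djS_anti (le_max_left j k)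
    · exact djS_anti (le_max_right j k)
  · apply qx_isLUB
    rw [Set.biInter_range]
    exact (djS_iInter haU' hKc).symm

theorem part1 : HasOneStepClosure (QX Rl) := by
  intro A
  letI T : TopologicalSpace (QX Rl) := Topology.scott (QX Rl) Set.univ
  haveI hS : Topology.IsScott (QX Rl) Set.univ := ⟨rfl⟩
  apply Subset.antisymm
  · have h1 : scottCl A ⊆ Star A := by
      apply closure_minimal (star_sub A)
      rw [Topology.IsScott.isClosed_iff_isLowerSet_and_dirSupClosed]
      exact ⟨star_lower A, star_dsc A⟩
    exact h1.trans (star_main A)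
  · rintro x ⟨D, hDdw, hDne, hDdir, hlub⟩
    have hcl : IsClosed (scottCl A) := isClosed_closure
    have hlow : IsLowerSet (scottCl A) := Topology.IsScott.isLowerSet_of_isClosed hcl
    have hdsc : DirSupClosed (scottCl A) := Topology.IsScott.dirSupClosed_of_isClosed hcl
    refine hdsc (fun e heD => ?_) hDne hDdir hlub
    obtain ⟨b, hbA, hle⟩ := hDdw heD
    exact hlow hle (subset_closure hbA)

theorem part2 : ¬ ContinuousPoset (QX Rl) := by
  intro hcont
  have h0 : IsCompact (toRl {(0:ℝ)}) := (Set.finite_singleton _).isCompact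
  set K0 : QX Rl := mkQ {(0:ℝ)} h0 with hK0def
  obtain ⟨hne, -, -⟩ := hcont K0
  obtain ⟨y, hy⟩ := hne
  set ys : Set ℝ := unRl y.1 with hysdef
  have hyc : IsCompact (toRl ys) := y.2.1
  have hclaim : ∀ δ : ℝ, 0 < δ → ∃ p : ℝ, 0 < p ∧ p < δ ∧ p ∉ ys := by
    intro δ hδ
    obtain ⟨ρ, hρ, hfar⟩ := rl_nll hyc (δ/2)
    refine ⟨max (δ/4) (δ/2 - ρ/2), lt_max_of_lt_left (by linarith), ?_, ?_⟩
    · apply max_lt <;> linarith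
    · intro hmem
      refine hfar _ hmem ⟨?_, ?_⟩
      · calc δ/2 - ρ < δ/2 - ρ/2 := by linarith
          _ ≤ max (δ/4) (δ/2 - ρ/2) := le_max_right _ _
      · apply max_lt <;> linarith
  have hrec : ∀ n : ℕ, ∃ p : ℝ, 0 < p ∧ p < 1/((n:ℝ)+1) ∧ p ∉ ys :=
    fun n => hclaim (1/((n:ℝ)+1)) (by positivity)
  choose aa ha1 ha2 ha3 using hrec
  set an : ℕ → Set ℝ := fun n => {aa n} with handef
  have haU' : ∀ n : ℕ, ∀ z ∈ an n, ∃ x ∈ ({(0:ℝ)} : Set ℝ), x ≤ z ∧ z < x + 1/((n:ℝ)+1) := by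
    intro n z hz
    rw [handef, mem_singleton_iff] at hz
    subst hz
    exact ⟨0, rfl, le_of_lt (ha1 n), by simpa using ha2 n⟩
  have haC : ∀ n, IsCompact (toRl (an n)) := fun n => (Set.finite_singleton _).isCompact
  set Dq : ℕ → QX Rl := fun j => mkQ _ (djS_compact haU' h0 haC j) with hDqdef
  have hlub : IsLUB (range Dq) K0 := by
    apply qx_isLUB
    rw [Set.biInter_range]
    exact (djS_iInter haU' h0).symm
  have hdir : DirectedOn (· ≤ ·) (range Dq) := by
    rintro x ⟨j, rfl⟩ z ⟨k, rfl⟩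
    refine ⟨Dq (max j k), mem_range_self _, ?_, ?_⟩
    · exact djS_anti (le_max_left j k)
    · exact djS_anti (le_max_right j k)
  obtain ⟨d, hdD, hdup⟩ := hy (range Dq) (range_nonempty _) hdir K0 hlub le_rfl
  obtain ⟨j, rfl⟩ := hdD
  obtain ⟨w, hw, hwle⟩ := hdup
  rw [show w = y from hw] at hwle
  have hmem : aa j ∈ djS ({(0:ℝ)} : Set ℝ) an j := djS_mem j rfl
  exact ha3 j (hwle hmem)

end OSC

/-- `Q(ℝₗ)` has one-step closure but is not a continuous poset. -/
theorem QX_sorgenfrey_oneStep_not_continuous :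
    HasOneStepClosure (QX Rl) ∧ ¬ ContinuousPoset (QX Rl) := by
  exact ⟨OSC.part1, OSC.part2⟩
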